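/- Let A be a finitely generated abelian group, let B be a finitely generated free abelian group, and let f : A → B be a group homomorphism such that the precomposition map f* : Hom(B, ℤ) → Hom(A, ℤ), φ ↦ φ ∘ f, is bijective. Then f is surjective and the kernel of f is exactly the torsion subgroup of A (i.e., for a ∈ A, f(a) = 0 if and only if a has finite order). -/
import Mathlib

open Module Submodule

/-- Let `A` be a finitely generated abelian group, `B` a finitely generated
free abelian group, and `f : A →+ B` a homomorphism such that precomposition with `f` is a
bijection `Hom(B, ℤ) → Hom(A, ℤ)`.  Then `f` is surjective and its kernel is exactly the
torsion subgroup of `A`: for `a : A`, `f a = 0` iff `a` has finite (additive) order. -/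
theorem surjective_and_ker_eq_torsion_of_intDual_bijective
    {A B : Type} [AddCommGroup A] [Module.Finite ℤ A]
    [AddCommGroup B] [Module.Finite ℤ B] [Module.Free ℤ B]
    (f : A →+ B)
    (hf : Function.Bijective fun φ : B →+ ℤ => φ.comp f) :
    Function.Surjective f ∧ ∀ a : A, f a = 0 ↔ IsOfFinAddOrder a := by
  classical
  set g : A →ₗ[ℤ] B := f.toIntLinearMap with hg
  -- transfer the hypothesis to `dualMap`
  have hdual : Function.Bijective (g.dualMap) := by
    have key : (g.dualMap : Dual ℤ B → Dual ℤ A) =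
        (addMonoidHomLequivInt (A := A) ℤ) ∘ (fun φ : B →+ ℤ => φ.comp f) ∘
          (addMonoidHomLequivInt (A := B) ℤ).symm := by
      ext ψ a; rfl
    rw [key]
    exact (addMonoidHomLequivInt (A := A) ℤ).bijective.comp
      (hf.comp (addMonoidHomLequivInt (A := B) ℤ).symm.bijective)
  -- the quotient by torsion
  set T := Submodule.torsion ℤ A with hT
  set Q := A ⧸ T with hQ
  haveI : Module.Finite ℤ Q := Module.Finite.quotient ℤ T
  haveI : Module.Free ℤ Q := Module.free_of_finite_type_torsion_free'
  -- every `φ : Dual ℤ A` kills torsion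
  have hkill : ∀ (φ : Dual ℤ A) (a : A), a ∈ T → φ a = 0 := by
    rintro φ a ⟨⟨n, hn⟩, hna⟩
    have : n • φ a = 0 := by
      rw [← map_smul]
      simpa using congrArg φ hna
    have hn' : (n : ℤ) ≠ 0 := mem_nonZeroDivisors_iff_ne_zero.mp hn
    exact (smul_eq_zero.mp this).resolve_left hn'
  -- dual of the quotient map is bijective
  set π : A →ₗ[ℤ] Q := T.mkQ with hπ
  have hπs : Function.Surjective π := Submodule.mkQ_surjective T
  have hπd : Function.Bijective (π.dualMap) := by
    constructor
    · intro ψ₁ ψ₂ h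
      ext a
      exact DFunLike.congr_fun h a
    · intro φ
      refine ⟨T.liftQ φ (fun a ha => hkill φ a ha), ?_⟩
      ext a; rfl
  -- assemble equivalences
  let eπ : Dual ℤ Q ≃ₗ[ℤ] Dual ℤ A := LinearEquiv.ofBijective π.dualMap hπd
  let eg : Dual ℤ B ≃ₗ[ℤ] Dual ℤ A := LinearEquiv.ofBijective g.dualMap hdual
  let E : Q ≃ₗ[ℤ] B :=
    (Module.evalEquiv ℤ Q).trans <| (eπ.symm.dualMap.trans eg.dualMap).trans
      (Module.evalEquiv ℤ B).symm
  -- key : f = E ∘ π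
  have hkey : ∀ a : A, f a = E (π a) := by
    intro a
    have : Module.evalEquiv ℤ B (f a) = (eπ.symm.dualMap.trans eg.dualMap)
        (Module.evalEquiv ℤ Q (π a)) := by
      ext ψ
      have h1 : π.dualMap (eπ.symm (g.dualMap ψ)) = g.dualMap ψ :=
        eπ.apply_symm_apply (g.dualMap ψ)
      have h2 : (eπ.symm (g.dualMap ψ)) (π a) = (g.dualMap ψ) a :=
        DFunLike.congr_fun h1 a
      simp only [LinearEquiv.trans_apply, LinearEquiv.dualMap_apply,
        Module.evalEquiv_apply, Module.Dual.eval_apply]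
      exact h2.symm
    calc f a = (Module.evalEquiv ℤ B).symm (Module.evalEquiv ℤ B (f a)) :=
          ((Module.evalEquiv ℤ B).symm_apply_apply _).symm
      _ = E (π a) := by rw [this]; rfl
  constructor
  · intro b
    obtain ⟨a, ha⟩ := hπs (E.symm b)
    exact ⟨a, by rw [hkey a, ha, E.apply_symm_apply]⟩
  · intro a
    have hmem : f a = 0 ↔ a ∈ T := by
      rw [hkey a]
      rw [show (0 : B) = E 0 from (map_zero E).symm]
      rw [E.injective.eq_iff]
      exact Submodule.Quotient.mk_eq_zero T
    rw [hmem, hT, Submodule.mem_torsion_iff, isOfFinAddOrder_iff_zsmul_eq_zero]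
    constructor
    · rintro ⟨⟨n, hn⟩, h⟩
      exact ⟨n, mem_nonZeroDivisors_iff_ne_zero.mp hn, h⟩
    · rintro ⟨n, hn, h⟩
      exact ⟨⟨n, mem_nonZeroDivisors_of_ne_zero hn⟩, h⟩
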